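/- Let Σ be a finite alphabet, M a finite monoid, and μ : Σ* → M a monoid morphism. Then there exists a bound h, depending only on M, such that every nonempty word w ∈ Σ⁺ admits a μ-forest of height at most h. -/

import Mathlib

inductive Forest (A : Type) : Type
  | leaf : A → Forest A
  | node : List (Forest A) → Forest A

namespace Forest

mutual
  /-- The word spelled out by the leaves of a forest, from left to right. -/
  def word {A : Type} : Forest A → List A
    | .leaf a => [a]
    | .node l => wordList l
  def wordList {A : Type} : List (Forest A) → List A
    | [] => []
    | t :: l => t.word ++ wordList l
end

mutual
  /-- The height of a forest: maximal nesting depth of internal nodes; a leaf has height 0. -/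
  def height {A : Type} : Forest A → ℕ
    | .leaf _ => 0
    | .node l => heightList l + 1
  def heightList {A : Type} : List (Forest A) → ℕ
    | [] => 0
    | t :: l => max t.height (heightList l)
end

mutual
  /-- The paths (sequences of child indices, from the root) of the leaves of a forest,
  in left-to-right order. -/
  def leafPaths {A : Type} : Forest A → List (List ℕ)
    | .leaf _ => [[]]
    | .node l => leafPathsList 0 l
  def leafPathsList {A : Type} : ℕ → List (Forest A) → List (List ℕ)
    | _, [] => []
    | n, t :: l => (t.leafPaths.map (n :: ·)) ++ leafPathsList (n + 1) l
end

def children {A : Type} : Forest A → List (Forest A)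
  | .leaf _ => []
  | .node l => l

/-- The subtree of a forest at a given path, if it exists. -/
def subtreeAt? {A : Type} : Forest A → List ℕ → Option (Forest A)
  | F, [] => some F
  | F, n :: p =>
    match F.children[n]? with
    | some t => t.subtreeAt? p
    | none => none

end Forest

/-- `IsForest μ c F` says `F` is a `μ`-forest (`c` standing for the cardinality `|M|`):
every internal node has at least 2 children, and if it has at least 3 children then all
children evaluate under `μ` to a common value `m` with `m ^ c = m ^ (c + 1)`. -/
inductive IsForest {A M : Type} [Monoid M] (μ : List A → M) (c : ℕ) : Forest A → Prop
  | leaf (a : A) : IsForest μ c (.leaf a)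
  | node (l : List (Forest A)) (h2 : 2 ≤ l.length)
      (hrec : ∀ t ∈ l, IsForest μ c t)
      (h3 : 3 ≤ l.length →
        ∃ m : M, (∀ t ∈ l, μ t.word = m) ∧ m ^ c = m ^ (c + 1)) :
      IsForest μ c (.node l)

def IsMonoidMorphism {A M : Type} [Monoid M] (μ : List A → M) : Prop :=
  μ [] = 1 ∧ ∀ u v : List A, μ (u ++ v) = μ u * μ v


namespace SimonFFT


variable {M : Type} [Monoid M]

def leJ (a b : M) : Prop := ∃ u v : M, a = u * b * v

def Jeq (a b : M) : Prop := leJ a b ∧ leJ b a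

lemma leJ_refl (a : M) : leJ a a := ⟨1, 1, by simp⟩

lemma leJ_trans {a b c : M} (h1 : leJ a b) (h2 : leJ b c) : leJ a c := by
  obtain ⟨u, v, rfl⟩ := h1
  obtain ⟨p, q, rfl⟩ := h2
  exact ⟨u * p, q * v, by simp [mul_assoc]⟩

lemma leJ_mul_left (a b : M) : leJ (a * b) b := ⟨a, 1, by simp⟩

lemma leJ_mul_right (a b : M) : leJ (a * b) a := ⟨1, b, by simp [mul_assoc]⟩

lemma exists_idem_pow [Finite M] (g : M) : ∃ k, 1 ≤ k ∧ g ^ k * g ^ k = g ^ k := by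
  obtain ⟨a, b, hab, he⟩ := Finite.exists_ne_map_eq_of_infinite (fun n : ℕ => g ^ n)
  wlog h : a < b generalizing a b
  · exact this b a hab.symm he.symm (by omega)
  have he' : g ^ a = g ^ b := he
  set d := b - a with hd
  have hd1 : 1 ≤ d := by omega
  have hb : b = a + d := by omega
  have hper : ∀ m, a ≤ m → g ^ (m + d) = g ^ m := by
    intro m hm
    have h1 : g ^ (m + d) = g ^ (m - a) * g ^ (a + d) := by
      rw [← pow_add]; congr 1; omega
    rw [h1, ← hb, ← he', ← pow_add]
    congr 1; omega
  have hmul : ∀ n m, a ≤ m → g ^ (m + n * d) = g ^ m := by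
    intro n
    induction n with
    | zero => simp
    | succ n ih =>
      intro m hm
      have h2 : m + (n + 1) * d = (m + d) + n * d := by ring
      rw [h2, ih (m + d) (by omega), hper m hm]
  refine ⟨(a + 1) * d, Nat.mul_pos (by omega) hd1, ?_⟩
  rw [← pow_add]
  exact hmul (a + 1) ((a + 1) * d) (by nlinarith)

lemma stabL [Finite M] {a b u v : M} (h : a = u * (b * a) * v) : ∃ z, a = z * (b * a) := by
  have hiter : ∀ n, a = (u * b) ^ n * a * v ^ n := by
    intro n
    induction n with
    | zero => simp
    | succ n ih =>
      calc a = u * (b * a) * v := h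
        _ = (u * b) * ((u * b) ^ n * a * v ^ n) * v := by
            conv_lhs => rw [ih]
            simp [mul_assoc]
        _ = (u * b) ^ (n + 1) * a * v ^ (n + 1) := by
            rw [pow_succ', pow_succ]; simp [mul_assoc]
  obtain ⟨k, hk1, hidem⟩ := exists_idem_pow (u * b)
  set e := (u * b) ^ k with hedef
  have h1 : a = e * a * v ^ k := hiter k
  have h2 : e * a = a := by
    calc e * a = e * (e * a * v ^ k) := by conv_lhs => rw [h1]
      _ = (e * e) * (a * v ^ k) := by simp [mul_assoc]
      _ = e * (a * v ^ k) := by rw [hidem]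
      _ = a := by rw [← mul_assoc, ← h1]
  have h3 : e = (u * b) ^ (k - 1) * (u * b) := by
    rw [← pow_succ, Nat.sub_add_cancel hk1]
  refine ⟨(u * b) ^ (k - 1) * u, ?_⟩
  calc a = e * a := h2.symm
    _ = (u * b) ^ (k - 1) * u * (b * a) := by rw [h3]; simp [mul_assoc]

lemma stabR [Finite M] {a b u v : M} (h : a = u * (a * b) * v) : ∃ z, a = (a * b) * z := by
  have hiter : ∀ n, a = u ^ n * a * (b * v) ^ n := by
    intro n
    induction n with
    | zero => simp
    | succ n ih =>
      calc a = u * (a * b) * v := h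
        _ = u * (u ^ n * a * (b * v) ^ n) * (b * v) := by
            conv_lhs => rw [ih]
            simp [mul_assoc]
        _ = u ^ (n + 1) * a * (b * v) ^ (n + 1) := by
            rw [pow_succ', pow_succ]; simp [mul_assoc]
  obtain ⟨k, hk1, hidem⟩ := exists_idem_pow (b * v)
  set f := (b * v) ^ k with hfdef
  have h1 : a = u ^ k * a * f := hiter k
  have h2 : a * f = a := by
    calc a * f = (u ^ k * a * f) * f := by conv_lhs => rw [h1]
      _ = u ^ k * (a * (f * f)) := by simp [mul_assoc]
      _ = u ^ k * (a * f) := by rw [hidem]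
      _ = a := by rw [← mul_assoc, ← h1]
  have h3 : f = (b * v) * (b * v) ^ (k - 1) := by
    rw [← pow_succ', Nat.sub_add_cancel hk1]
  refine ⟨v * (b * v) ^ (k - 1), ?_⟩
  calc a = a * f := h2.symm
    _ = (a * b) * (v * (b * v) ^ (k - 1)) := by rw [h3]; simp [mul_assoc]

lemma key_left [Finite M] {s x : M} (hsx : s * x = s) (hx : leJ x s) : ∃ z, x = z * s := by
  obtain ⟨u, v, huv⟩ := hx
  have hx' : x = u * (s * x) * v := by rw [hsx]; exact huv
  obtain ⟨z, hz⟩ := stabL hx'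
  exact ⟨z, by rw [hz, hsx]⟩

lemma key_right [Finite M] {t y : M} (hyt : y * t = t) (hy : leJ y t) : ∃ z, y = t * z := by
  obtain ⟨p, q, hpq⟩ := hy
  have hy' : y = p * (y * t) * q := by rw [hyt]; exact hpq
  obtain ⟨z, hz⟩ := stabR hy'
  exact ⟨z, by rw [hz, hyt]⟩

/-- The key uniqueness lemma: a two-sided stabilizer `J`-below its anchors is unique. -/
lemma key [Finite M] {s t x y : M} (hsx : s * x = s) (hxt : x * t = t)
    (hx : leJ x s) (hsy : s * y = s) (hyt : y * t = t) (hy : leJ y t) : x = y := by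
  obtain ⟨z, hzx⟩ := key_left hsx hx
  obtain ⟨z', hty⟩ := key_right hyt hy
  calc x = z * (s * y) := by rw [hsy, ← hzx]
    _ = (z * s) * y := by rw [mul_assoc]
    _ = x * y := by rw [← hzx]
    _ = (x * t) * z' := by rw [hty, mul_assoc]
    _ = t * z' := by rw [hxt]
    _ = y := hty.symm

lemma key_idem [Finite M] {s t x : M} (hsx : s * x = s) (hxt : x * t = t)
    (hx : leJ x s) : x * x = x := by
  obtain ⟨z, hzx⟩ := key_left hsx hx
  calc x * x = z * (s * x) := by rw [hzx, mul_assoc]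
    _ = z * s := by rw [hsx]
    _ = x := hzx.symm

lemma idem_pow {e : M} (he : e * e = e) : ∀ n, e ^ (n + 1) = e := by
  intro n
  induction n with
  | zero => simp
  | succ n ih => rw [pow_succ, ih, he]

lemma idem_pow_eq {e : M} (he : e * e = e) {c : ℕ} (hc : 1 ≤ c) : e ^ c = e ^ (c + 1) := by
  obtain ⟨m, rfl⟩ : ∃ m, c = m + 1 := ⟨c - 1, by omega⟩
  rw [idem_pow he, idem_pow he]



section ForestUtils
variable {A : Type}


lemma word_leaf (a : A) : (Forest.leaf a).word = [a] := rfl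

lemma word_pair (F G : Forest A) : (Forest.node [F, G]).word = F.word ++ G.word := by
  simp [Forest.word, Forest.wordList]

lemma wordList_eq (l : List (Forest A)) : Forest.wordList l = (l.map Forest.word).flatten := by
  induction l with
  | nil => simp [Forest.wordList]
  | cons t l ih => simp [Forest.wordList, ih]

lemma word_node (l : List (Forest A)) :
    (Forest.node l).word = (l.map Forest.word).flatten := by
  rw [show (Forest.node l).word = Forest.wordList l from rfl, wordList_eq]

lemma height_leaf (a : A) : (Forest.leaf a).height = 0 := rfl

lemma height_pair (F G : Forest A) :
    (Forest.node [F, G]).height = max F.height G.height + 1 := by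
  simp [Forest.height, Forest.heightList]

lemma heightList_le {l : List (Forest A)} {n : ℕ} (h : ∀ F ∈ l, F.height ≤ n) :
    Forest.heightList l ≤ n := by
  induction l with
  | nil => simp [Forest.heightList]
  | cons t l ih =>
    simp only [Forest.heightList, max_le_iff]
    exact ⟨h t (by simp), ih fun F hF => h F (by simp [hF])⟩

lemma height_node_le {l : List (Forest A)} {n : ℕ} (h : ∀ F ∈ l, F.height ≤ n) :
    (Forest.node l).height ≤ n + 1 :=
  Nat.succ_le_succ (heightList_le h)

lemma height_pair_le {F G : Forest A} {n : ℕ} (hF : F.height ≤ n) (hG : G.height ≤ n) :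
    (Forest.node [F, G]).height ≤ n + 1 := by
  rw [height_pair]; exact Nat.succ_le_succ (max_le hF hG)

variable {M : Type} [Monoid M]

lemma isForest_pair {μ : List A → M} {c : ℕ} {F G : Forest A}
    (hF : IsForest μ c F) (hG : IsForest μ c G) : IsForest μ c (.node [F, G]) := by
  refine .node _ (by simp) ?_ (by intro h; simp at h)
  intro t ht
  rcases ht with _ | ⟨_, _ | ⟨_, h⟩⟩
  · exact hF
  · exact hG
  · cases h

end ForestUtils

section Chunks
variable {A : Type} {M : Type} [Monoid M]




def ft (cs : List (List A)) (i : ℕ) : List A := (cs.take i).flatten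
def fd (cs : List (List A)) (i : ℕ) : List A := (cs.drop i).flatten
def seg (cs : List (List A)) (i j : ℕ) : List A := ((cs.drop i).take (j - i)).flatten

lemma ft_eq (cs : List (List A)) (i j : ℕ) (h : i ≤ j) :
    ft cs j = ft cs i ++ seg cs i j := by
  unfold ft seg
  rw [← List.flatten_append]
  congr 1
  conv_lhs => rw [show j = i + (j - i) by omega]
  exact List.take_add ..

lemma fd_eq (cs : List (List A)) (i j : ℕ) (h : i ≤ j) :
    fd cs i = seg cs i j ++ fd cs j := by
  unfold fd seg
  rw [← List.flatten_append]
  congr 1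
  have h1 : cs.drop j = (cs.drop i).drop (j - i) := by
    rw [List.drop_drop]; congr 1; omega
  rw [h1, List.take_append_drop]

lemma seg_append (cs : List (List A)) (i j k : ℕ) (hij : i ≤ j) (hjk : j ≤ k) :
    seg cs i j ++ seg cs j k = seg cs i k := by
  unfold seg
  rw [← List.flatten_append]
  congr 1
  have h1 : cs.drop j = (cs.drop i).drop (j - i) := by
    rw [List.drop_drop]; congr 1; omega
  rw [h1]
  conv_rhs => rw [show k - i = (j - i) + (k - j) by omega]
  exact (List.take_add ..).symm

lemma seg_single (cs : List (List A)) (i : ℕ) (h : i < cs.length) :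
    seg cs i (i + 1) = cs[i] := by
  unfold seg
  rw [show i + 1 - i = 1 by omega, List.drop_eq_getElem_cons h,
    List.take_succ_cons, List.take_zero, List.flatten_cons, List.flatten_nil,
    List.append_nil]

lemma mu_ft {μ : List A → M} (hμ : IsMonoidMorphism μ) (x : List A) (cs : List (List A)) {i j : ℕ}
    (h : i ≤ j) : μ (x ++ ft cs j) = μ (x ++ ft cs i) * μ (seg cs i j) := by
  rw [ft_eq cs i j h, ← List.append_assoc, hμ.2]

lemma mu_fd {μ : List A → M} (hμ : IsMonoidMorphism μ) (z : List A) (cs : List (List A)) {i j : ℕ}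
    (h : i ≤ j) : μ (fd cs i ++ z) = μ (seg cs i j) * μ (fd cs j ++ z) := by
  rw [fd_eq cs i j h, List.append_assoc, hμ.2]



def pairAt (μ : List A → M) (x z : List A) (cs : List (List A)) (i : ℕ) : M × M :=
  (μ (x ++ ft cs i), μ (fd cs i ++ z))

def pairSet (μ : List A → M) (x z : List A) (cs : List (List A)) (lo hi : ℕ) : Set (M × M) :=
  pairAt μ x z cs '' Set.Ioo lo hi

def infixVals (μ : List A → M) (w : List A) : Set M :=
  {m | ∃ u, u ≠ ([] : List A) ∧ u <:+: w ∧ μ u = m}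

end Chunks
end SimonFFT

namespace SimonFFT

section Main
variable {A : Type} {M : Type} [Monoid M] [Fintype M]

lemma tailrec {μ : List A → M} (hμ : IsMonoidMorphism μ) (j₀ : M) (x z : List A)
    (cs : List (List A))
    (Sg : ∀ i j, 1 ≤ i → i < j → j < cs.length → Jeq j₀ (μ (seg cs i j)))
    (Hprev : ℕ) (π : M × M) (ib hb : ℕ) (hib : 1 ≤ ib) (hhbr : hb ≤ cs.length)
    (CH : ∀ lo hi, ib ≤ lo → lo < hi → hi ≤ hb →
        (∀ i, lo < i → i < hi → pairAt μ x z cs i ≠ π) →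
        ∃ F, IsForest μ (Fintype.card M) F ∧ F.word = seg cs lo hi ∧ F.height ≤ Hprev) :
    ∀ n i₀, hb - i₀ ≤ n → ib ≤ i₀ → i₀ < hb → pairAt μ x z cs i₀ = π →
    ∃ (Fs : List (Forest A)) (Ft : Forest A),
      (∀ F ∈ Fs, IsForest μ (Fintype.card M) F ∧ F.height ≤ Hprev ∧
          π.1 * μ F.word = π.1 ∧ μ F.word * π.2 = π.2 ∧ Jeq j₀ (μ F.word)) ∧
      IsForest μ (Fintype.card M) Ft ∧ Ft.height ≤ Hprev ∧
      (Fs.map Forest.word).flatten ++ Ft.word = seg cs i₀ hb := by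
  intro n
  induction n with
  | zero => intro i₀ h0 _ h2 _; omega
  | succ n ih =>
    intro i₀ hn hibi hi0hb hπ0
    classical
    set S := (Finset.Ioo i₀ hb).filter (fun i => pairAt μ x z cs i = π) with hS
    by_cases hSne : S.Nonempty
    · set j := S.min' hSne with hj
      have hjS : j ∈ S := S.min'_mem hSne
      have hjIoo : i₀ < j ∧ j < hb := by
        have h1 := (Finset.mem_filter.mp hjS).1
        exact Finset.mem_Ioo.mp h1
      have hπj : pairAt μ x z cs j = π := (Finset.mem_filter.mp hjS).2
      have hnofree : ∀ i, i₀ < i → i < j → pairAt μ x z cs i ≠ π := by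
        intro i h1 h2 hcon
        have : i ∈ S := Finset.mem_filter.mpr ⟨Finset.mem_Ioo.mpr ⟨h1, by omega⟩, hcon⟩
        have := S.min'_le i this
        omega
      obtain ⟨F₁, hF₁f, hF₁w, hF₁h⟩ := CH i₀ j hibi hjIoo.1 (by omega) hnofree
      have hfst0 : μ (x ++ ft cs i₀) = π.1 := congrArg Prod.fst hπ0
      have hsnd0 : μ (fd cs i₀ ++ z) = π.2 := congrArg Prod.snd hπ0
      have hfstj : μ (x ++ ft cs j) = π.1 := congrArg Prod.fst hπj
      have hsndj : μ (fd cs j ++ z) = π.2 := congrArg Prod.snd hπj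
      have hsx : π.1 * μ (seg cs i₀ j) = π.1 := by
        rw [← hfst0, ← mu_ft hμ x cs (le_of_lt hjIoo.1), hfstj, hfst0]
      have hxt : μ (seg cs i₀ j) * π.2 = π.2 := by
        rw [← hsndj, ← mu_fd hμ z cs (le_of_lt hjIoo.1), hsnd0, hsndj]
      have hJg : Jeq j₀ (μ (seg cs i₀ j)) :=
        Sg i₀ j (by omega) hjIoo.1 (by omega)
      obtain ⟨Fs', Ft, hFs', hFtf, hFth, hws⟩ :=
        ih j (by omega) (by omega) hjIoo.2 hπj
      refine ⟨F₁ :: Fs', Ft, ?_, hFtf, hFth, ?_⟩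
      · intro F hF
        rcases List.mem_cons.mp hF with rfl | hF'
        · exact ⟨hF₁f, hF₁h, by rw [hF₁w]; exact hsx, by rw [hF₁w]; exact hxt,
            by rw [hF₁w]; exact hJg⟩
        · exact hFs' F hF'
      · rw [List.map_cons, List.flatten_cons, List.append_assoc, hws, hF₁w,
          seg_append cs i₀ j hb (le_of_lt hjIoo.1) (le_of_lt hjIoo.2)]
    · have hfree : ∀ i, i₀ < i → i < hb → pairAt μ x z cs i ≠ π := by
        intro i h1 h2 hcon
        exact hSne ⟨i, Finset.mem_filter.mpr ⟨Finset.mem_Ioo.mpr ⟨h1, h2⟩, hcon⟩⟩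
      obtain ⟨Ft, hFtf, hFtw, hFth⟩ := CH i₀ hb hibi hi0hb le_rfl hfree
      exact ⟨[], Ft, by simp, hFtf, hFth, by simpa using hFtw⟩

lemma chunkA {μ : List A → M} (hμ : IsMonoidMorphism μ) (j₀ : M) (x z : List A)
    (cs : List (List A)) (h₀ : ℕ)
    (hG : ∀ u ∈ cs, ∃ G, IsForest μ (Fintype.card M) G ∧ G.word = u ∧ G.height ≤ h₀)
    (Sp : ∀ i, 1 ≤ i → i < cs.length →
        Jeq j₀ (μ (x ++ ft cs i)) ∧ Jeq j₀ (μ (fd cs i ++ z)))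
    (Sg : ∀ i j, 1 ≤ i → i < j → j < cs.length → Jeq j₀ (μ (seg cs i j))) :
    ∀ k lo hi, lo < hi → hi ≤ cs.length → (pairSet μ x z cs lo hi).ncard ≤ k →
    ∃ F, IsForest μ (Fintype.card M) F ∧ F.word = seg cs lo hi ∧
      F.height ≤ h₀ + 3 * k := by
  have base : ∀ lo, lo < cs.length →
      ∃ F, IsForest μ (Fintype.card M) F ∧ F.word = seg cs lo (lo + 1) ∧ F.height ≤ h₀ := by
    intro lo h
    obtain ⟨G, hGf, hGw, hGh⟩ := hG cs[lo] (List.getElem_mem h)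
    exact ⟨G, hGf, by rw [hGw, seg_single cs lo h], hGh⟩
  have hcM : 1 ≤ Fintype.card M := by
    have : Nonempty M := ⟨1⟩
    exact Fintype.card_pos
  intro k
  induction k with
  | zero =>
    intro lo hi h1 h2 h3
    rcases Nat.lt_or_ge (lo + 1) hi with h | h
    · exfalso
      have hmem : pairAt μ x z cs (lo + 1) ∈ pairSet μ x z cs lo hi :=
        ⟨lo + 1, Set.mem_Ioo.mpr ⟨by omega, by omega⟩, rfl⟩
      have := (Set.ncard_pos (Set.toFinite _)).mpr ⟨_, hmem⟩
      omega
    · have he : hi = lo + 1 := by omega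
      subst he
      obtain ⟨F, hF1, hF2, hF3⟩ := base lo (by omega)
      exact ⟨F, hF1, hF2, by omega⟩
  | succ k ih =>
    intro lo hi h1 h2 h3
    rcases Nat.lt_or_ge (lo + 1) hi with h | h
    swap
    · have he : hi = lo + 1 := by omega
      subst he
      obtain ⟨F, hF1, hF2, hF3⟩ := base lo (by omega)
      exact ⟨F, hF1, hF2, by omega⟩
    · set π := pairAt μ x z cs (lo + 1) with hπdef
      have hπmem : π ∈ pairSet μ x z cs lo hi :=
        ⟨lo + 1, Set.mem_Ioo.mpr ⟨by omega, by omega⟩, rfl⟩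
      have CH : ∀ lo' hi', lo + 1 ≤ lo' → lo' < hi' → hi' ≤ hi →
          (∀ i, lo' < i → i < hi' → pairAt μ x z cs i ≠ π) →
          ∃ F, IsForest μ (Fintype.card M) F ∧ F.word = seg cs lo' hi' ∧
            F.height ≤ h₀ + 3 * k := by
        intro lo' hi' ha hb' hc hfree
        apply ih lo' hi' hb' (le_trans hc h2)
        have hsub : pairSet μ x z cs lo' hi' ⊆ pairSet μ x z cs lo hi \ {π} := by
          rintro p ⟨i, hi', rfl⟩
          obtain ⟨hA, hB⟩ := Set.mem_Ioo.mp hi'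
          exact ⟨⟨i, Set.mem_Ioo.mpr ⟨by omega, by omega⟩, rfl⟩,
            by simpa using hfree i hA hB⟩
        have h4 := Set.ncard_le_ncard hsub (Set.toFinite _)
        have h5 := Set.ncard_diff_singleton_lt_of_mem hπmem (Set.toFinite _)
        omega
      obtain ⟨Fs, Ft, hFs, hFtf, hFth, hwords⟩ :=
        tailrec hμ j₀ x z cs Sg (h₀ + 3 * k) π (lo + 1) hi (by omega) h2 CH
          (hi - (lo + 1)) (lo + 1) (by omega) le_rfl (by omega) rfl
      obtain ⟨G₁, hG₁f, hG₁w, hG₁h⟩ := base lo (by omega)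
      have hSp := Sp (lo + 1) (by omega) (by omega)
      have hJ1 : Jeq j₀ π.1 := hSp.1
      have hJ2 : Jeq j₀ π.2 := hSp.2
      cases Fs with
      | nil =>
        simp only [List.map_nil, List.flatten_nil, List.nil_append] at hwords
        refine ⟨.node [G₁, Ft], isForest_pair hG₁f hFtf, ?_, ?_⟩
        · rw [word_pair, hG₁w, hwords,
            seg_append cs lo (lo + 1) hi (by omega) (by omega)]
        · have := height_pair_le (n := h₀ + 3 * k + 2)
            (le_trans hG₁h (by omega)) (le_trans hFth (by omega))
          omega
      | cons F₁ Fs' =>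
        have hkey : ∀ F ∈ (F₁ :: Fs'), μ F.word = μ F₁.word := by
          intro F hF
          obtain ⟨_, _, hsx, hxt, hJx⟩ := hFs F hF
          obtain ⟨_, _, hsy, hyt, hJy⟩ := hFs F₁ (by simp)
          exact key hsx hxt (leJ_trans hJx.2 hJ1.1) hsy hyt (leJ_trans hJy.2 hJ2.1)
        have hidem : μ F₁.word * μ F₁.word = μ F₁.word := by
          obtain ⟨_, _, hsx, hxt, hJx⟩ := hFs F₁ (by simp)
          exact key_idem hsx hxt (leJ_trans hJx.2 hJ1.1)
        -- build the middle forest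
        have hmid : ∃ mid : Forest A, IsForest μ (Fintype.card M) mid ∧
            mid.word = ((F₁ :: Fs').map Forest.word).flatten ∧
            mid.height ≤ h₀ + 3 * k + 1 := by
          cases Fs' with
          | nil =>
            refine ⟨F₁, (hFs F₁ (by simp)).1, by simp, ?_⟩
            have := (hFs F₁ (by simp)).2.1
            omega
          | cons F₂ Fs'' =>
            refine ⟨.node (F₁ :: F₂ :: Fs''), ?_, word_node _, ?_⟩
            · refine .node _ (by simp only [List.length_cons]; omega) (fun t ht => (hFs t ht).1) ?_
              intro _
              exact ⟨μ F₁.word, fun t ht => hkey t ht, idem_pow_eq hidem hcM⟩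
            · exact height_node_le (fun F hF => (hFs F hF).2.1)
        obtain ⟨mid, hmidf, hmidw, hmidh⟩ := hmid
        refine ⟨.node [G₁, .node [mid, Ft]],
          isForest_pair hG₁f (isForest_pair hmidf hFtf), ?_, ?_⟩
        · rw [word_pair, word_pair, hG₁w, hmidw, hwords,
            seg_append cs lo (lo + 1) hi (by omega) (by omega)]
        · have hinner := height_pair_le (n := h₀ + 3 * k + 1)
            hmidh (le_trans hFth (by omega))
          have := height_pair_le (n := h₀ + 3 * k + 2)
            (le_trans hG₁h (by omega)) hinner
          omega

lemma decomp {μ : List A → M} (j₀ : M) :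
    ∀ n (v : List A), v.length ≤ n →
    ∃ (cs : List (List A)) (tl : List A), v = cs.flatten ++ tl ∧
      (∀ u ∈ cs, ∃ h a, u = h ++ [a] ∧ (h = ([] : List A) ∨ ¬ leJ (μ h) j₀) ∧
        leJ (μ u) j₀) ∧
      (tl = [] ∨ ¬ leJ (μ tl) j₀) := by
  intro n
  induction n with
  | zero =>
    intro v hv
    have hv0 : v = [] := List.length_eq_zero_iff.mp (by omega)
    exact ⟨[], [], by simp [hv0], by simp, Or.inl rfl⟩
  | succ n ih =>
    intro v hv
    rcases eq_or_ne v [] with rfl | hvne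
    · exact ⟨[], [], by simp, by simp, Or.inl rfl⟩
    by_cases hlow : leJ (μ v) j₀
    · classical
      set S := (Finset.Icc 1 v.length).filter (fun i => leJ (μ (v.take i)) j₀) with hSdef
      have hvpos : 0 < v.length := List.length_pos_iff.mpr hvne
      have hSne : S.Nonempty := by
        refine ⟨v.length, Finset.mem_filter.mpr ⟨Finset.mem_Icc.mpr ⟨hvpos, le_rfl⟩, ?_⟩⟩
        rw [List.take_length]
        exact hlow
      set i₀ := S.min' hSne with hi₀
      have hi₀S : i₀ ∈ S := S.min'_mem hSne
      have hi₀Icc : 1 ≤ i₀ ∧ i₀ ≤ v.length :=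
        Finset.mem_Icc.mp (Finset.mem_filter.mp hi₀S).1
      have hi₀low : leJ (μ (v.take i₀)) j₀ := (Finset.mem_filter.mp hi₀S).2
      have hidx : i₀ - 1 < v.length := by omega
      have htake : v.take i₀ = v.take (i₀ - 1) ++ [v[i₀ - 1]] := by
        conv_lhs => rw [show i₀ = (i₀ - 1) + 1 by omega]
        rw [List.take_succ, List.getElem?_eq_getElem hidx]
        rfl
      have hh : v.take (i₀ - 1) = ([] : List A) ∨ ¬ leJ (μ (v.take (i₀ - 1))) j₀ := by
        rcases Nat.eq_or_lt_of_le hi₀Icc.1 with h1 | h1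
        · left; rw [← h1]; rfl
        · right
          intro hcon
          have : i₀ - 1 ∈ S := Finset.mem_filter.mpr
            ⟨Finset.mem_Icc.mpr ⟨by omega, by omega⟩, hcon⟩
          have := S.min'_le _ this
          omega
      obtain ⟨cs', tl', hflat, hcs', htl'⟩ := ih (v.drop i₀) (by
        have : (v.drop i₀).length = v.length - i₀ := List.length_drop
        omega)
      refine ⟨v.take i₀ :: cs', tl', ?_, ?_, htl'⟩
      · rw [List.flatten_cons, List.append_assoc, ← hflat, List.take_append_drop]
      · intro u hu
        rcases List.mem_cons.mp hu with rfl | hu'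
        · exact ⟨v.take (i₀ - 1), v[i₀ - 1], htake, hh, hi₀low⟩
        · exact hcs' u hu'
    · exact ⟨[], v, by simp, by simp, Or.inr hlow⟩

lemma main {μ : List A → M} (hμ : IsMonoidMorphism μ) :
    ∀ k (w : List A), w ≠ [] → (infixVals μ w).ncard ≤ k →
    ∃ F, IsForest μ (Fintype.card M) F ∧ F.word = w ∧
      F.height ≤ (3 * Nat.card (M × M) + 2) * k := by
  intro k
  induction k with
  | zero =>
    intro w hw hn
    exfalso
    have hmem : μ w ∈ infixVals μ w := ⟨w, hw, List.infix_refl w, rfl⟩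
    have := (Set.ncard_pos (Set.toFinite _)).mpr ⟨μ w, hmem⟩
    omega
  | succ k ih =>
    intro w hw hn
    set K := Nat.card (M × M) with hK
    set j₀ := μ w with hj₀
    obtain ⟨cs, tl, hflat, hcs, htl⟩ := decomp j₀ w.length w le_rfl
    have hcsne : cs ≠ [] := by
      rintro rfl
      simp only [List.flatten_nil, List.nil_append] at hflat
      rcases htl with h | h
      · exact hw (hflat.trans h)
      · rw [← hflat] at h
        exact h (leJ_refl j₀)
    have highrec : ∀ v : List A, v ≠ [] → v <:+: w → ¬ leJ (μ v) j₀ →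
        ∃ F, IsForest μ (Fintype.card M) F ∧ F.word = v ∧
          F.height ≤ (3 * K + 2) * k := by
      intro v hvne hvinf hvhigh
      apply ih v hvne
      have hsub : infixVals μ v ⊆ infixVals μ w := by
        rintro m ⟨u, hu1, hu2, rfl⟩
        exact ⟨u, hu1, hu2.trans hvinf, rfl⟩
      have hj0w : j₀ ∈ infixVals μ w := ⟨w, hw, List.infix_refl w, rfl⟩
      have hj0v : j₀ ∉ infixVals μ v := by
        rintro ⟨u, hu1, ⟨p, q, hpq⟩, hu3⟩
        apply hvhigh
        refine ⟨μ p, μ q, ?_⟩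
        rw [← hpq, hμ.2, hμ.2, hu3]
      have hss : infixVals μ v ⊂ infixVals μ w := by
        rw [Set.ssubset_def]
        exact ⟨hsub, fun hsup => hj0v (hsup hj0w)⟩
      have := Set.ncard_lt_ncard hss (Set.toFinite _)
      omega
    set h₀ := (3 * K + 2) * k + 1 with hh₀
    have hGf : ∀ u ∈ cs, ∃ G, IsForest μ (Fintype.card M) G ∧ G.word = u ∧
        G.height ≤ h₀ := by
      intro u hu
      obtain ⟨hd, a, hua, hhd, hulow⟩ := hcs u hu
      have huinf : u <:+: w := by
        obtain ⟨s, t, hst⟩ := List.append_of_mem hu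
        refine ⟨s.flatten, t.flatten ++ tl, ?_⟩
        rw [hflat, hst]
        simp [List.flatten_append, List.flatten_cons, List.append_assoc]
      rcases eq_or_ne hd ([] : List A) with rfl | hhdne
      · refine ⟨.leaf a, .leaf a, ?_, by simp [height_leaf]⟩
        rw [word_leaf, hua, List.nil_append]
      · have hhigh : ¬ leJ (μ hd) j₀ := hhd.resolve_left hhdne
        have hinfu : hd <:+: u := ⟨[], [a], by simp [hua]⟩
        obtain ⟨Fh, hFf, hFw, hFh⟩ := highrec hd hhdne (hinfu.trans huinf) hhigh
        refine ⟨.node [Fh, .leaf a], isForest_pair hFf (.leaf a), ?_, ?_⟩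
        · rw [word_pair, hFw, word_leaf, hua]
        · rw [height_pair, show (Forest.leaf a : Forest A).height = 0 from rfl,
            Nat.max_zero]
          omega
    have hlowchunk : ∀ u ∈ cs, leJ (μ u) j₀ := by
      intro u hu
      obtain ⟨_, _, _, _, hl⟩ := hcs u hu
      exact hl
    have hw_split : ∀ i, μ ([] ++ ft cs i) * μ (fd cs i ++ tl) = j₀ := by
      intro i
      have heq : ([] ++ ft cs i) ++ (fd cs i ++ tl) = w := by
        simp only [List.nil_append]
        rw [hflat, ← List.append_assoc]
        congr 1
        show (cs.take i).flatten ++ (cs.drop i).flatten = cs.flatten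
        rw [← List.flatten_append, List.take_append_drop]
      rw [← hμ.2, heq]
    have Sp : ∀ i, 1 ≤ i → i < cs.length →
        Jeq j₀ (μ ([] ++ ft cs i)) ∧ Jeq j₀ (μ (fd cs i ++ tl)) := by
      intro i hi1 hi2
      constructor
      · constructor
        · exact ⟨1, μ (fd cs i ++ tl), by rw [one_mul]; exact (hw_split i).symm⟩
        · have hmu := mu_ft hμ [] cs (show i - 1 ≤ i by omega)
          have hseg : seg cs (i - 1) i = cs[i - 1] := by
            conv_lhs => rw [show i = (i - 1) + 1 by omega]
            exact seg_single cs (i - 1) (by omega)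
          rw [hmu, hseg]
          exact leJ_trans (leJ_mul_left _ _) (hlowchunk _ (List.getElem_mem (by omega)))
      · constructor
        · exact ⟨μ ([] ++ ft cs i), 1, by rw [mul_one]; exact (hw_split i).symm⟩
        · have hmu := mu_fd hμ tl cs (show i ≤ i + 1 by omega)
          rw [hmu, seg_single cs i (by omega)]
          exact leJ_trans (leJ_mul_right _ _) (hlowchunk _ (List.getElem_mem (by omega)))
    have Sg : ∀ i j, 1 ≤ i → i < j → j < cs.length → Jeq j₀ (μ (seg cs i j)) := by
      intro i j hi1 hij hj
      constructor
      · refine ⟨μ ([] ++ ft cs i), μ (fd cs j ++ tl), ?_⟩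
        have h4 := hw_split i
        have h5 := mu_fd hμ tl cs (le_of_lt hij)
        rw [← h4, h5, mul_assoc]
      · have h6 : seg cs i (i + 1) ++ seg cs (i + 1) j = seg cs i j :=
          seg_append cs i (i + 1) j (by omega) (by omega)
        have h7 : μ (seg cs i j) = μ (cs[i]'(by omega)) * μ (seg cs (i + 1) j) := by
          rw [← h6, hμ.2, seg_single cs i (by omega)]
        rw [h7]
        exact leJ_trans (leJ_mul_right _ _) (hlowchunk _ (List.getElem_mem (by omega)))
    have hr : 1 ≤ cs.length := List.length_pos_iff.mpr hcsne
    have hpairs : (pairSet μ [] tl cs 0 cs.length).ncard ≤ K := by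
      calc (pairSet μ [] tl cs 0 cs.length).ncard
          ≤ (Set.univ : Set (M × M)).ncard :=
            Set.ncard_le_ncard (Set.subset_univ _) (Set.toFinite _)
        _ = K := Set.ncard_univ _
    obtain ⟨Fcs, hFcsf, hFcsw, hFcsh⟩ :=
      chunkA hμ j₀ [] tl cs h₀ hGf Sp Sg K 0 cs.length hr le_rfl hpairs
    have hFcsw' : Fcs.word = cs.flatten := by
      rw [hFcsw]
      show ((cs.drop 0).take (cs.length - 0)).flatten = cs.flatten
      simp
    rcases eq_or_ne tl ([] : List A) with rfl | htlne
    · refine ⟨Fcs, hFcsf, by rw [hFcsw', hflat, List.append_nil], ?_⟩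
      rw [Nat.mul_succ]
      omega
    · have htlhigh : ¬ leJ (μ tl) j₀ := htl.resolve_left htlne
      have htlinf : tl <:+: w := ⟨cs.flatten, [], by rw [hflat, List.append_nil]⟩
      obtain ⟨Ftl, hFtl1, hFtl2, hFtl3⟩ := highrec tl htlne htlinf htlhigh
      refine ⟨.node [Fcs, Ftl], isForest_pair hFcsf hFtl1, ?_, ?_⟩
      · rw [word_pair, hFcsw', hFtl2, hflat]
      · have := height_pair_le (n := h₀ + 3 * K) hFcsh (le_trans hFtl3 (by omega))
        rw [Nat.mul_succ]
        omega

end Main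
end SimonFFT

theorem stmt3 {M : Type} [Monoid M] [Fintype M] :
    ∃ h : ℕ, ∀ (A : Type) [Fintype A] (μ : List A → M), IsMonoidMorphism μ →
      ∀ w : List A, w ≠ [] →
        ∃ F : Forest A, IsForest μ (Fintype.card M) F ∧ F.word = w ∧ F.height ≤ h := by
  refine ⟨(3 * Nat.card (M × M) + 2) * Fintype.card M, ?_⟩
  intro A _ μ hμ w hw
  apply SimonFFT.main hμ (Fintype.card M) w hw
  calc (SimonFFT.infixVals μ w).ncard
      ≤ (Set.univ : Set M).ncard :=
        Set.ncard_le_ncard (Set.subset_univ _) (Set.toFinite _)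
    _ = Nat.card M := Set.ncard_univ M
    _ = Fintype.card M := Nat.card_eq_fintype_card
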